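/- Let R be a unital associative ℝ-algebra, let a, τ ∈ ℝ, and let w, v ∈ R satisfy the C_{L,a}-relations with det A = 1, i.e. w²v = a•w − v w² + τ•(w v w) and w v² = a•v − v² w + τ•(v w v). Set d = w·v, d̃ = v·w and Ĉ = (−4a)•(d + d̃) + (2 − τ)•(d + d̃)² + (2 + τ)•(d − d̃)². Then Ĉ commutes with both w and v: Ĉ·w = w·Ĉ and Ĉ·v = v·Ĉ. -/
import Mathlib


/-- the Casimir element
`Ĉ = −4a(d+d') + (2−τ)(d+d')² + (2+τ)(d−d')²` (with `d = w v`, `d' = v w`)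
commutes with `w` and `v` when the `C_{L,a}`-relations hold with `det A = 1`. -/
theorem stmt_4 (R : Type*) [Ring R] [Algebra ℝ R]
    (a τ : ℝ) (w v : R)
    (h1 : w * w * v = a • w - v * w * w + τ • (w * v * w))
    (h2 : w * v * v = a • v - v * v * w + τ • (v * w * v))
    (d d' C : R) (hd : d = w * v) (hd' : d' = v * w)
    (hC : C = (-4 * a) • (d + d') + (2 - τ) • (d + d') ^ 2 + (2 + τ) • (d - d') ^ 2) :
    C * w = w * C ∧ C * v = v * C := by
  subst hd hd' hC
  constructor
  · linear_combination (norm := (noncomm_ring; match_scalars <;> (simp only [smul_eq_mul, zsmul_eq_mul]; push_cast; ring)))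
      (-4 : ℝ) • (h1 * (w * v)) + (2 * τ) • (h1 * (v * w))
        + (-2 * τ) • ((w * v) * h1) + (4 : ℝ) • ((v * w) * h1)
  · linear_combination (norm := (noncomm_ring; match_scalars <;> (simp only [smul_eq_mul, zsmul_eq_mul]; push_cast; ring)))
      (-2 * τ) • (v * h1 * v) + (2 * τ) • ((v * v) * h1)
        + (2 * τ) • (h2 * (w * v)) + (-4 : ℝ) • (h2 * (v * w))
        + (-2 * τ) • (v * h2 * w) + (4 : ℝ) • ((w * v) * h2)
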